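/- Let x : ℤ → A be a uniformly recurrent sequence and y : ℤ → B a periodic sequence (i.e., there exists q > 0 with y(i+q) = y(i) for all i). Then the product sequence x ⊗ y : ℤ → A × B defined by (x ⊗ y)(i) = (x(i), y(i)) is uniformly recurrent. -/

import Mathlib

/-- The product of a uniformly recurrent sequence with a periodic sequence is
uniformly recurrent. -/
theorem stmt_4 {A B : Type*} [Fintype A] [Fintype B] (x : ℤ → A) (y : ℤ → B)
    (hur : ∀ n : ℕ, ∃ m : ℕ, ∀ s t : ℤ, ∃ p : ℤ, t ≤ p ∧ p + n ≤ t + m ∧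
      ∀ i : ℕ, i < n → x (p + i) = x (s + i))
    (q : ℤ) (hq : 0 < q) (hper : ∀ i : ℤ, y (i + q) = y i) :
    ∀ n : ℕ, ∃ m : ℕ, ∀ s t : ℤ, ∃ p : ℤ, t ≤ p ∧ p + n ≤ t + m ∧
      ∀ i : ℕ, i < n → (x (p + i), y (p + i)) = (x (s + i), y (s + i)) := by
  classical
  haveI : NeZero q.toNat := ⟨by omega⟩
  have hqt : ((q.toNat : ℤ)) = q := Int.toNat_of_nonneg hq.le
  -- periodicity in both directions
  have hyq : ∀ a b : ℤ, q ∣ a - b → y a = y b := by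
    have hstep : ∀ k : ℤ, ∀ b : ℤ, y (b + q * k) = y b := by
      intro k
      induction k using Int.induction_on with
      | zero => intro b; simp
      | succ k ih =>
          intro b
          have h1 : b + q * ((k : ℤ) + 1) = (b + q * k) + q := by ring
          rw [h1, hper, ih]
      | pred k ih =>
          intro b
          have h := hper (b + q * (-(k : ℤ) - 1))
          have h1 : b + q * (-(k : ℤ) - 1) + q = b + q * (-(k : ℤ)) := by ring
          rw [h1] at h
          rw [← h, ih]
    rintro a b ⟨k, hk⟩
    have h : a = b + q * k := by linarith
    rw [h]; exact hstep k b
  intro n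
  -- key: for each s, occurrences of the word x[s,s+n) at positions ≡ s mod q are syndetic
  have key : ∀ s : ℤ, ∃ M : ℕ, ∀ t : ℤ, ∃ p : ℤ, t ≤ p ∧ p + (n : ℤ) ≤ t + (M : ℤ) ∧
      q ∣ p - s ∧ ∀ i : ℕ, i < n → x (p + i) = x (s + i) := by
    intro s
    -- choose witnesses for each achievable residue
    have hwit : ∀ ρ : ZMod q.toNat, ∃ p : ℤ,
        ((∀ i : ℕ, i < n → x (p + i) = x (s + i)) ∧ ((p - s : ℤ) : ZMod q.toNat) = ρ) ∨
        ¬ (∃ p' : ℤ, (∀ i : ℕ, i < n → x (p' + i) = x (s + i)) ∧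
            ((p' - s : ℤ) : ZMod q.toNat) = ρ) := by
      intro ρ
      by_cases h : ∃ p' : ℤ, (∀ i : ℕ, i < n → x (p' + i) = x (s + i)) ∧
          ((p' - s : ℤ) : ZMod q.toNat) = ρ
      · obtain ⟨p', hp'⟩ := h; exact ⟨p', Or.inl hp'⟩
      · exact ⟨s, Or.inr h⟩
    choose P hP using hwit
    set L₀ : ℕ := Finset.univ.sup (fun ρ : ZMod q.toNat => (P ρ - s).natAbs) with hL₀
    obtain ⟨M₀, hM₀⟩ := hur (2 * L₀ + n)
    refine ⟨M₀, fun t => ?_⟩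
    obtain ⟨π, hπ1, hπ2, hmatch⟩ := hM₀ (s - L₀) t
    -- exact copy of the window [s-L₀, s+L₀+n) at [π, π+2L₀+n)
    have hcopy : ∀ d : ℤ, -(L₀ : ℤ) ≤ d → d < (L₀ : ℤ) + n → x (π + L₀ + d) = x (s + d) := by
      intro d hd1 hd2
      have h := hmatch (d + L₀).toNat (by omega)
      have e1 : π + (L₀ : ℤ) + d = π + (((d + L₀).toNat : ℤ)) := by omega
      have e2 : s + d = (s - L₀) + (((d + L₀).toNat : ℤ)) := by omega
      rw [e1, e2]; exact h
    set σ : ℤ := π + L₀ with hσ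
    have hshift : ∀ p' : ℤ, (∀ i : ℕ, i < n → x (p' + i) = x (s + i)) →
        (p' - s).natAbs ≤ L₀ →
        ∀ i : ℕ, i < n → x (σ + (p' - s) + i) = x (s + i) := by
      intro p' hp' hb i hi
      have h1 := hcopy (p' - s + i) (by omega) (by omega)
      have e1 : σ + (p' - s) + i = π + (L₀ : ℤ) + (p' - s + i) := by omega
      have e2 : s + (p' - s + (i : ℤ)) = p' + i := by ring
      rw [e1, h1, e2]; exact hp' i hi
    -- the residue set
    set Rf : Finset (ZMod q.toNat) := Finset.univ.filter (fun ρ => ∃ p' : ℤ,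
        (∀ i : ℕ, i < n → x (p' + i) = x (s + i)) ∧ ((p' - s : ℤ) : ZMod q.toNat) = ρ)
      with hRf
    set δ : ZMod q.toNat := ((σ - s : ℤ) : ZMod q.toNat) with hδ
    have himg : Rf.image (fun ρ => ρ + δ) ⊆ Rf := by
      intro ρ' hρ'
      obtain ⟨ρ, hρ, rfl⟩ := Finset.mem_image.mp hρ'
      have hρ2 := (Finset.mem_filter.mp hρ).2
      rcases hP ρ with ⟨hmem, hres⟩ | hno
      · refine Finset.mem_filter.mpr ⟨Finset.mem_univ _, ⟨σ + (P ρ - s), ?_, ?_⟩⟩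
        · refine hshift (P ρ) hmem ?_
          rw [hL₀]
          exact Finset.le_sup (f := fun ρ : ZMod q.toNat => (P ρ - s).natAbs)
            (Finset.mem_univ ρ)
        · have e : σ + (P ρ - s) - s = (P ρ - s) + (σ - s) := by ring
          rw [e, Int.cast_add, hres, hδ]
      · exact absurd hρ2 hno
    have hinj : Function.Injective (fun ρ : ZMod q.toNat => ρ + δ) :=
      fun a b hab => by simpa using hab
    have heq : Rf.image (fun ρ => ρ + δ) = Rf :=
      Finset.eq_of_subset_of_card_le himg
        (le_of_eq (Finset.card_image_of_injective _ hinj).symm)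
    have h0 : (0 : ZMod q.toNat) ∈ Rf := by
      refine Finset.mem_filter.mpr ⟨Finset.mem_univ _, ⟨s, fun i hi => rfl, by simp⟩⟩
    rw [← heq] at h0
    obtain ⟨ρ, hρmem, hρeq⟩ := Finset.mem_image.mp h0
    rcases hP ρ with ⟨hmem, hres⟩ | hno
    · have hb : (P ρ - s).natAbs ≤ L₀ := by
        rw [hL₀]
        exact Finset.le_sup (f := fun ρ : ZMod q.toNat => (P ρ - s).natAbs)
          (Finset.mem_univ ρ)
      refine ⟨σ + (P ρ - s), ?_, ?_, ?_, hshift (P ρ) hmem hb⟩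
      · omega
      · have h2 := hπ2
        push_cast at h2
        omega
      · have hz : ((σ + (P ρ - s) - s : ℤ) : ZMod q.toNat) = 0 := by
          have e : σ + (P ρ - s) - s = (P ρ - s) + (σ - s) := by ring
          rw [e, Int.cast_add, hres, ← hδ]; exact hρeq
        have hd := (ZMod.intCast_zmod_eq_zero_iff_dvd _ _).mp hz
        rwa [hqt] at hd
    · exact absurd (Finset.mem_filter.mp hρmem).2 hno
  -- uniformize over the finitely many (word, residue) classes
  have keyC : ∀ v : (Fin n → A) × ZMod q.toNat, ∃ M : ℕ, ∀ s : ℤ,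
      ((fun i : Fin n => x (s + (i : ℕ))) = v.1 ∧ ((s : ℤ) : ZMod q.toNat) = v.2) →
      ∀ t : ℤ, ∃ p : ℤ, t ≤ p ∧ p + (n : ℤ) ≤ t + (M : ℤ) ∧ q ∣ p - s ∧
        ∀ i : ℕ, i < n → x (p + i) = x (s + i) := by
    intro v
    by_cases hex : ∃ s : ℤ, ((fun i : Fin n => x (s + (i : ℕ))) = v.1 ∧
        ((s : ℤ) : ZMod q.toNat) = v.2)
    · obtain ⟨s₀, hs₀⟩ := hex
      obtain ⟨M, hM⟩ := key s₀
      refine ⟨M, fun s hs t => ?_⟩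
      obtain ⟨p, h1, h2, h3, h4⟩ := hM t
      have hword : ∀ i : ℕ, i < n → x (s₀ + i) = x (s + i) := by
        intro i hi
        have := congrFun (hs₀.1.trans hs.1.symm) ⟨i, hi⟩
        simpa using this
      have hres : q ∣ s₀ - s := by
        have hz : ((s₀ - s : ℤ) : ZMod q.toNat) = 0 := by
          rw [Int.cast_sub, hs₀.2, hs.2, sub_self]
        have hd := (ZMod.intCast_zmod_eq_zero_iff_dvd _ _).mp hz
        rwa [hqt] at hd
      refine ⟨p, h1, h2, ?_, fun i hi => (h4 i hi).trans (hword i hi)⟩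
      have := dvd_add h3 hres
      have e : p - s₀ + (s₀ - s) = p - s := by ring
      rwa [e] at this
    · exact ⟨0, fun s hs => absurd ⟨s, hs⟩ hex⟩
  choose F hF using keyC
  refine ⟨Finset.univ.sup F, fun s t => ?_⟩
  obtain ⟨p, h1, h2, h3, h4⟩ :=
    hF ((fun i : Fin n => x (s + (i : ℕ))), ((s : ℤ) : ZMod q.toNat)) s ⟨rfl, rfl⟩ t
  have hle : F ((fun i : Fin n => x (s + (i : ℕ))), ((s : ℤ) : ZMod q.toNat)) ≤
      Finset.univ.sup F := Finset.le_sup (Finset.mem_univ _)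
  refine ⟨p, h1, by omega, fun i hi => ?_⟩
  have hx := h4 i hi
  have hy : y (p + i) = y (s + i) := by
    refine hyq _ _ ?_
    have e : (p + (i : ℤ)) - (s + i) = p - s := by ring
    rw [e]; exact h3
  rw [hx, hy]
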